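/- Let H be a Hilbert space, G ⊆ H a linear subspace satisfying uniqueness of representations in ℝe + G (with e ∈ H, the sum direct), and suppose the best approximation g(e) of e in G exists with ‖e − g(e)‖ > 0. Then for any h ∈ H: a best approximation g(h) of h in G exists iff a best approximation (c(h), g^ex(h)) of h in ℝe + G exists, and in that case c(h) = ⟨h, e − g(e)⟩ / ‖e − g(e)‖² and g^ex(h) = g(h) − c(h) g(e). -/

import Mathlib

/-- g is a best approximation of h in the subspace G. -/
def IsBestApprox {E : Type*} [NormedAddCommGroup E] [InnerProductSpace ℝ E]
    (G : Submodule ℝ E) (h g : E) : Prop :=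
  g ∈ G ∧ ∀ g' ∈ G, ‖g - h‖ ≤ ‖g' - h‖

/-- (c, g) is a best approximation of h in ℝ·e + G. -/
def IsBestApproxExt {E : Type*} [NormedAddCommGroup E] [InnerProductSpace ℝ E]
    (G : Submodule ℝ E) (e h : E) (c : ℝ) (g : E) : Prop :=
  g ∈ G ∧ ∀ (c' : ℝ), ∀ g' ∈ G, ‖c • e + g - h‖ ≤ ‖c' • e + g' - h‖

/-- If v has minimal norm along the line v + ℝ w, then v ⊥ w. -/
lemma aux_orth {E : Type*} [NormedAddCommGroup E] [InnerProductSpace ℝ E]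
    (v w : E) (hmin : ∀ t : ℝ, ‖v‖ ≤ ‖v + t • w‖) : (inner ℝ v w : ℝ) = 0 := by
  by_cases hw : w = 0
  · simp [hw]
  have hw2 : (0 : ℝ) < ‖w‖ ^ 2 := by
    have := norm_pos_iff.mpr hw
    positivity
  set I : ℝ := inner ℝ v w with hI
  set t : ℝ := -I / ‖w‖ ^ 2 with ht
  have key : ‖v + t • w‖ ^ 2 = ‖v‖ ^ 2 + 2 * (t * I) + t ^ 2 * ‖w‖ ^ 2 := by
    rw [norm_add_sq_real, real_inner_smul_right, norm_smul, Real.norm_eq_abs,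
      mul_pow, sq_abs, ← hI]
  have h1 := hmin t
  have h2 : ‖v‖ ^ 2 ≤ ‖v + t • w‖ ^ 2 := by
    apply pow_le_pow_left₀ (norm_nonneg _) h1
  rw [key] at h2
  set q : ℝ := 2 * (t * I) + t ^ 2 * ‖w‖ ^ 2 with hq
  have hq0 : 0 ≤ q := by linarith
  have h3 : q * ‖w‖ ^ 2 = -I ^ 2 := by
    rw [hq, ht]; field_simp; ring
  have h4 : I ^ 2 ≤ 0 := by nlinarith [mul_nonneg hq0 hw2.le]
  have h5 : I ^ 2 = 0 := le_antisymm h4 (sq_nonneg I)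
  exact pow_eq_zero_iff two_ne_zero |>.mp h5

/-- Pythagoras-style comparison. -/
lemma norm_le_of_orth {E : Type*} [NormedAddCommGroup E] [InnerProductSpace ℝ E]
    (a h x : E) (horth : (inner ℝ (a - h) (x - a) : ℝ) = 0) : ‖a - h‖ ≤ ‖x - h‖ := by
  have hs : x - h = (x - a) + (a - h) := by abel
  have hsq : ‖x - h‖ ^ 2 = ‖x - a‖ ^ 2 + ‖a - h‖ ^ 2 := by
    rw [hs, norm_add_sq_real, real_inner_comm, horth]; ring
  nlinarith [norm_nonneg (x - h), norm_nonneg (a - h), norm_nonneg (x - a)]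

theorem MVH_exMVH_link {E : Type*} [NormedAddCommGroup E] [InnerProductSpace ℝ E]
    (G : Submodule ℝ E) (e : E)
    (huniqdec : ∀ (c1 c2 : ℝ) (g1 g2 : E), g1 ∈ G → g2 ∈ G →
      c1 • e + g1 = c2 • e + g2 → c1 = c2 ∧ g1 = g2)
    (ge : E) (hge : IsBestApprox G e ge) (hpos : 0 < ‖e - ge‖) (h : E) :
    ((∃ g, IsBestApprox G h g) ↔ ∃ c g, IsBestApproxExt G e h c g) ∧
    (∀ (g : E) (c : ℝ) (gex : E), IsBestApprox G h g → IsBestApproxExt G e h c gex →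
      c = (inner ℝ h (e - ge) : ℝ) / ‖e - ge‖ ^ 2 ∧ gex = g - c • ge) := by
  set I : ℝ := inner ℝ h (e - ge) with hIdef
  set N : ℝ := ‖e - ge‖ ^ 2 with hNdef
  have hN : N ≠ 0 := by positivity
  set c0 : ℝ := I / N with hc0def
  -- residual of e is orthogonal to G
  have hr : ∀ w ∈ G, (inner ℝ (e - ge) w : ℝ) = 0 := by
    intro w hw
    have key : (inner ℝ (ge - e) w : ℝ) = 0 := by
      apply aux_orth
      intro t
      have := hge.2 (ge + t • w) (G.add_mem hge.1 (G.smul_mem t hw))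
      have heq : ge + t • w - e = ge - e + t • w := by abel
      rwa [heq] at this
    have : e - ge = -(ge - e) := by abel
    rw [this, inner_neg_left, key, neg_zero]
  have hNself : (inner ℝ (e - ge) (e - ge) : ℝ) = N := real_inner_self_eq_norm_sq _
  -- orthogonality from a best approximation in G
  have horthG : ∀ g : E, IsBestApprox G h g → ∀ w ∈ G, (inner ℝ (g - h) w : ℝ) = 0 := by
    intro g hg w hw
    apply aux_orth
    intro t
    have := hg.2 (g + t • w) (G.add_mem hg.1 (G.smul_mem t hw))
    have heq : g + t • w - h = g - h + t • w := by abel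
    rwa [heq] at this
  -- orthogonality from a best approximation in ℝe + G
  have horthE : ∀ (c : ℝ) (gex : E), IsBestApproxExt G e h c gex →
      (∀ w ∈ G, (inner ℝ (c • e + gex - h) w : ℝ) = 0) ∧
      (inner ℝ (c • e + gex - h) e : ℝ) = 0 := by
    intro c gex hbe
    constructor
    · intro w hw
      apply aux_orth
      intro t
      have := hbe.2 c (gex + t • w) (G.add_mem hbe.1 (G.smul_mem t hw))
      have heq : c • e + (gex + t • w) - h = c • e + gex - h + t • w := by abel
      rwa [heq] at this
    · apply aux_orth
      intro t
      have := hbe.2 (c + t) gex hbe.1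
      have heq : (c + t) • e + gex - h = c • e + gex - h + t • e := by
        rw [add_smul]; abel
      rwa [heq] at this
  -- key1: from best approx in G to best approx in ℝe + G
  have key1 : ∀ g : E, IsBestApprox G h g → IsBestApproxExt G e h c0 (g - c0 • ge) := by
    intro g hg
    have hmem : g - c0 • ge ∈ G := G.sub_mem hg.1 (G.smul_mem c0 hge.1)
    refine ⟨hmem, ?_⟩
    intro c' g' hg'
    set a : E := c0 • e + (g - c0 • ge) with hadef
    have hvdef : a - h = (g - h) + c0 • (e - ge) := by
      rw [hadef, smul_sub]; abel
    -- v ⊥ G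
    have hvG : ∀ w ∈ G, (inner ℝ (a - h) w : ℝ) = 0 := by
      intro w hw
      rw [hvdef, inner_add_left, real_inner_smul_left, horthG g hg w hw, hr w hw]
      ring
    -- v ⊥ e
    have hve : (inner ℝ (a - h) e : ℝ) = 0 := by
      have esplit : e = (e - ge) + ge := by abel
      have h1 : (inner ℝ (g - h) (e - ge) : ℝ) = -I := by
        rw [inner_sub_left]
        have hg0 : (inner ℝ g (e - ge) : ℝ) = 0 := by
          rw [real_inner_comm]; exact hr g hg.1
        rw [hg0, hIdef]; ring
      have h2 : (inner ℝ (g - h) ge : ℝ) = 0 := horthG g hg ge hge.1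
      have h3 : (inner ℝ (e - ge) ge : ℝ) = 0 := hr ge hge.1
      have hc0N : c0 * N = I := div_mul_cancel₀ I hN
      calc (inner ℝ (a - h) e : ℝ)
          = inner ℝ ((g - h) + c0 • (e - ge)) ((e - ge) + ge) := by rw [hvdef, ← esplit]
        _ = inner ℝ (g - h) (e - ge) + inner ℝ (g - h) ge
            + c0 * inner ℝ (e - ge) (e - ge) + c0 * (inner ℝ (e - ge) ge : ℝ) := by
            simp only [inner_add_left, inner_add_right, real_inner_smul_left]
            ring
        _ = -I + 0 + c0 * N + c0 * 0 := by rw [h1, h2, h3, hNself]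
        _ = 0 := by rw [hc0N]; ring
    apply norm_le_of_orth
    have hxa : (c' • e + g') - a = (c' - c0) • e + (g' - (g - c0 • ge)) := by
      rw [hadef, sub_smul]; abel
    rw [hxa, inner_add_right, real_inner_smul_right, hve,
      hvG _ (G.sub_mem hg' hmem)]
    ring
  -- key2: from best approx in ℝe + G to best approx in G
  have key2 : ∀ (c : ℝ) (gex : E), IsBestApproxExt G e h c gex →
      IsBestApprox G h (gex + c • ge) := by
    intro c gex hbe
    obtain ⟨hvG, _⟩ := horthE c gex hbe
    have hmem : gex + c • ge ∈ G := G.add_mem hbe.1 (G.smul_mem c hge.1)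
    refine ⟨hmem, ?_⟩
    intro g' hg'
    have hgh : gex + c • ge - h = (c • e + gex - h) - c • (e - ge) := by
      rw [smul_sub]; abel
    apply norm_le_of_orth
    rw [hgh, inner_sub_left, real_inner_smul_left,
      hvG _ (G.sub_mem hg' hmem), hr _ (G.sub_mem hg' hmem)]
    ring
  constructor
  · constructor
    · rintro ⟨g, hg⟩
      exact ⟨c0, g - c0 • ge, key1 g hg⟩
    · rintro ⟨c, gex, hbe⟩
      exact ⟨gex + c • ge, key2 c gex hbe⟩
  · intro g c gex hg hbe
    -- both c•e+gex and c0•e+(g-c0•ge) are best approximations in ℝe+G, hence equal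
    have hbe0 := key1 g hg
    obtain ⟨haG, hae⟩ := horthE c gex hbe
    obtain ⟨hbG, hbe'⟩ := horthE c0 (g - c0 • ge) hbe0
    set a : E := c • e + gex with hadef
    set b : E := c0 • e + (g - c0 • ge) with hbdef
    have hmem : gex - (g - c0 • ge) ∈ G := G.sub_mem hbe.1 hbe0.1
    have hab : a - b = (c - c0) • e + (gex - (g - c0 • ge)) := by
      rw [hadef, hbdef, sub_smul]; abel
    have hzero : (inner ℝ (a - b) (a - b) : ℝ) = 0 := by
      have hsplit : a - b = (a - h) - (b - h) := by abel
      rw [hsplit, inner_sub_left, ← hsplit, hab,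
        inner_add_right, inner_add_right, real_inner_smul_right, real_inner_smul_right,
        hae, hbe', haG _ hmem, hbG _ hmem]
      ring
    have haeqb : a = b := sub_eq_zero.mp (inner_self_eq_zero.mp hzero)
    obtain ⟨hc, hgex⟩ := huniqdec c c0 gex (g - c0 • ge) hbe.1 hbe0.1 haeqb
    refine ⟨hc, ?_⟩
    rw [hgex, hc]
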